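/- Let τ₀ : ℝ² → (0,∞) and Q₀ : ℝ² → ℂ_I be smooth, and let g : ℝ² → L be a smooth map with |g|² nowhere vanishing, satisfying the g-system: ∂_z g = (∂_z(log √τ₀))·g + (Q₀/√τ₀)·J·ĝ·I and ∂_z̄ g = (√τ₀/4)·J·ĝ·I. Then ∂_z̄ Q₀ = 0 (Q₀ is I-holomorphic) and ∂_z(∂_z̄(log √τ₀)) = −|Q₀|²/τ₀ + τ₀/16. -/

import Mathlib

/-!
`ℍ^ℂ` is modelled as `Quaternion ℂ` (complex coefficients on `1, I, J, K`, central complex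
unit `i = Complex.I`, `I² = J² = K² = −1`, `I*J = K = −J*I`).  Maps on `ℝ²` are taken on
`ℝ × ℝ`; smoothness and the partial derivatives `∂ₓ`, `∂_y` are meant coefficientwise, and
`qdz f = (1/2)(∂ₓ f − I·∂_y f)`, `qdzbar f = (1/2)(∂ₓ f + I·∂_y f)` (left multiplication
by the quaternion `I`).  `cI` embeds `ℂ` as `ℂ_I = ℝ·1 ⊕ ℝ·I ⊂ ℍ^ℂ`.
-/

noncomputable section

/-- The quaternion `I`. -/
def Iq : Quaternion ℂ := ⟨0, 1, 0, 0⟩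

/-- The quaternion `J`. -/
def Jq : Quaternion ℂ := ⟨0, 0, 1, 0⟩

/-- Coefficientwise complex conjugation `â` on the complex quaternions. -/
def qhat (a : Quaternion ℂ) : Quaternion ℂ :=
  ⟨starRingEnd ℂ a.re, starRingEnd ℂ a.imI, starRingEnd ℂ a.imJ, starRingEnd ℂ a.imK⟩

/-- The embedding of `ℂ` onto `ℂ_I = ℝ·1 ⊕ ℝ·I ⊂ ℍ^ℂ`, sending the complex unit to `I`. -/
def cI (w : ℂ) : Quaternion ℂ := ⟨((w.re : ℝ) : ℂ), ((w.im : ℝ) : ℂ), 0, 0⟩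

/-- The coefficientwise directional derivative of an `ℍ^ℂ`-valued map on `ℝ²`. -/
def qpd (v : ℝ × ℝ) (f : ℝ × ℝ → Quaternion ℂ) (p : ℝ × ℝ) : Quaternion ℂ :=
  ⟨fderiv ℝ (fun s => (f s).re) p v, fderiv ℝ (fun s => (f s).imI) p v,
   fderiv ℝ (fun s => (f s).imJ) p v, fderiv ℝ (fun s => (f s).imK) p v⟩

/-- `∂_z f := (1/2)(∂ₓ f − I·∂_y f)`, with `I·` the left multiplication by `I` in `ℍ^ℂ`. -/
def qdz (f : ℝ × ℝ → Quaternion ℂ) (p : ℝ × ℝ) : Quaternion ℂ :=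
  (2 : ℂ)⁻¹ • (qpd (1, 0) f p - Iq * qpd (0, 1) f p)

/-- `∂_z̄ f := (1/2)(∂ₓ f + I·∂_y f)`. -/
def qdzbar (f : ℝ × ℝ → Quaternion ℂ) (p : ℝ × ℝ) : Quaternion ℂ :=
  (2 : ℂ)⁻¹ • (qpd (1, 0) f p + Iq * qpd (0, 1) f p)

/-- Smoothness (coefficientwise) of an `ℍ^ℂ`-valued map on `ℝ²`. -/
def QSmooth (f : ℝ × ℝ → Quaternion ℂ) : Prop :=
  ContDiff ℝ (⊤ : ℕ∞) (fun p => (f p).re) ∧ ContDiff ℝ (⊤ : ℕ∞) (fun p => (f p).imI) ∧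
  ContDiff ℝ (⊤ : ℕ∞) (fun p => (f p).imJ) ∧ ContDiff ℝ (⊤ : ℕ∞) (fun p => (f p).imK)

/-- The real-valued function `r`, regarded as `ℂ_I`-valued (i.e. `ℍ^ℂ`-valued). -/
def rQ (r : ℝ) : Quaternion ℂ := ⟨((r : ℝ) : ℂ), 0, 0, 0⟩

/-- `L := {(1/2)(1+iI)(a+bJ) : a, b ∈ ℂ} ⊂ ℍ^ℂ`. -/
def Lset : Set (Quaternion ℂ) :=
  {g | ∃ a b : ℂ, g = (2 : ℂ)⁻¹ •
    ((⟨1, Complex.I, 0, 0⟩ : Quaternion ℂ) * (⟨a, 0, b, 0⟩ : Quaternion ℂ))}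

/-- For `g = (1/2)(1+iI)(a+bJ) ∈ L` (so that `a = 2·g.re`, `b = 2·g.imJ`), the squared norm
`|g|² := |a|² − |b|²`. -/
def LnormSq (g : Quaternion ℂ) : ℝ :=
  Complex.normSq (2 * g.re) - Complex.normSq (2 * g.imJ)

/-- The `g`-system: `∂_z g = (∂_z log √τ₀)·g + (Q₀/√τ₀)·J·ĝ·I` and
`∂_z̄ g = (√τ₀/4)·J·ĝ·I`, with the `ℂ_I`-valued Weierstrass data `(Q₀, τ₀)`. -/
def GSystem (τ₀ : ℝ × ℝ → ℝ) (Q₀ : ℝ × ℝ → ℂ) (g : ℝ × ℝ → Quaternion ℂ) : Prop :=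
  ∀ p : ℝ × ℝ,
    qdz g p = qdz (fun s => rQ (Real.log (Real.sqrt (τ₀ s)))) p * g p
        + (Real.sqrt (τ₀ p))⁻¹ • (cI (Q₀ p) * (Jq * qhat (g p) * Iq)) ∧
    qdzbar g p = (Real.sqrt (τ₀ p) / 4) • (Jq * qhat (g p) * Iq)

namespace S10
open Complex

abbrev SM := (⊤ : ℕ∞)
def dd (v : ℝ × ℝ) (w : ℝ × ℝ → ℂ) (p : ℝ × ℝ) : ℂ := fderiv ℝ w p v
def Sm (w : ℝ × ℝ → ℂ) : Prop := ∀ q, ContDiffAt ℝ SM w q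

lemma top_add_one_le : (SM : WithTop ℕ∞) + 1 ≤ (SM : WithTop ℕ∞) := by
  exact_mod_cast le_refl _

lemma two_le_top : (2 : WithTop ℕ∞) ≤ (SM : WithTop ℕ∞) := by
  have : ((2:ℕ∞) : WithTop ℕ∞) ≤ (SM : WithTop ℕ∞) := by exact_mod_cast le_top
  simpa using this

lemma Sm.diffAt {w p} (h : Sm w) : DifferentiableAt ℝ w p :=
  (h p).differentiableAt (by simp [SM])

lemma Sm.dd {w} (h : Sm w) (v : ℝ × ℝ) : Sm (dd v w) := by
  intro q
  exact ((h q).fderiv_right top_add_one_le).clm_apply contDiffAt_const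

lemma Sm.mul {f g} (hf : Sm f) (hg : Sm g) : Sm (fun q => f q * g q) :=
  fun q => (hf q).mul (hg q)

lemma Sm.conj {f} (hf : Sm f) : Sm (fun q => (starRingEnd ℂ) (f q)) := fun q =>
  (conjCLE.contDiff.contDiffAt (x := f q)).comp q (hf q)

lemma dd_congr {w₁ w₂ : ℝ × ℝ → ℂ} (h : ∀ x, w₁ x = w₂ x) (v p) :
    dd v w₁ p = dd v w₂ p := by
  unfold dd; rw [funext h]

lemma dd_add {f g : ℝ × ℝ → ℂ} {p} (hf : DifferentiableAt ℝ f p)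
    (hg : DifferentiableAt ℝ g p) (v) :
    dd v (fun q => f q + g q) p = dd v f p + dd v g p := by
  unfold dd; rw [fderiv_fun_add hf hg]; simp

lemma dd_mul {f g : ℝ × ℝ → ℂ} {p} (hf : DifferentiableAt ℝ f p)
    (hg : DifferentiableAt ℝ g p) (v) :
    dd v (fun q => f q * g q) p = dd v f p * g p + f p * dd v g p := by
  unfold dd; rw [fderiv_fun_mul hf hg]; simp; ring

lemma dd_cmul {f : ℝ × ℝ → ℂ} {p} (hf : DifferentiableAt ℝ f p) (c : ℂ) (v) :
    dd v (fun q => c * f q) p = c * dd v f p := by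
  unfold dd; rw [fderiv_const_mul hf]; simp

lemma dd_sub {f g : ℝ × ℝ → ℂ} {p} (hf : DifferentiableAt ℝ f p)
    (hg : DifferentiableAt ℝ g p) (v) :
    dd v (fun q => f q - g q) p = dd v f p - dd v g p := by
  unfold dd; rw [fderiv_fun_sub hf hg]; simp

lemma dd_conj {f : ℝ × ℝ → ℂ} {p} (hf : DifferentiableAt ℝ f p) (v) :
    dd v (fun q => (starRingEnd ℂ) (f q)) p = (starRingEnd ℂ) (dd v f p) := by
  unfold dd
  have : (fun q => (starRingEnd ℂ) (f q)) = (conjCLE ∘ f) := rfl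
  rw [this, fderiv_comp _ (conjCLE.differentiableAt) hf, conjCLE.fderiv]
  simp

lemma dd_ofReal {f : ℝ × ℝ → ℝ} {p} (hf : DifferentiableAt ℝ f p) (v) :
    dd v (fun q => ((f q : ℝ) : ℂ)) p = ((fderiv ℝ f p v : ℝ) : ℂ) := by
  unfold dd
  have : (fun q => ((f q : ℝ) : ℂ)) = (Complex.ofRealCLM ∘ f) := rfl
  rw [this, fderiv_comp _ Complex.ofRealCLM.differentiableAt hf]
  simp

lemma fderiv_re {f : ℝ × ℝ → ℂ} {p} (hf : DifferentiableAt ℝ f p) (v) :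
    fderiv ℝ (fun q => (f q).re) p v = (dd v f p).re := by
  unfold dd
  have : (fun q => (f q).re) = (Complex.reCLM ∘ f) := rfl
  rw [this, fderiv_comp _ Complex.reCLM.differentiableAt hf]
  simp

lemma fderiv_im {f : ℝ × ℝ → ℂ} {p} (hf : DifferentiableAt ℝ f p) (v) :
    fderiv ℝ (fun q => (f q).im) p v = (dd v f p).im := by
  unfold dd
  have : (fun q => (f q).im) = (Complex.imCLM ∘ f) := rfl
  rw [this, fderiv_comp _ Complex.imCLM.differentiableAt hf]
  simp

lemma dd_swap {w : ℝ × ℝ → ℂ} (h : Sm w) (v v' : ℝ × ℝ) (p : ℝ × ℝ) :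
    dd v (dd v' w) p = dd v' (dd v w) p := by
  have hsym := (h p).isSymmSndFDerivAt (by simpa using two_le_top)
  have hd : DifferentiableAt ℝ (fderiv ℝ w) p :=
    ((h p).fderiv_right top_add_one_le).differentiableAt (by simp [SM])
  have key : ∀ a b : ℝ × ℝ, dd a (dd b w) p = fderiv ℝ (fderiv ℝ w) p a b := by
    intro a b
    unfold dd
    rw [show (fun q => fderiv ℝ w q b) = (fun q => (fderiv ℝ w q) b) from rfl,
      fderiv_clm_apply hd (differentiableAt_const b)]
    simp
  rw [key, key, hsym]

def Dc (w : ℝ × ℝ → ℂ) (p : ℝ × ℝ) : ℂ :=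
  (2:ℂ)⁻¹ * (dd (1,0) w p + Complex.I * dd (0,1) w p)
def Db (w : ℝ × ℝ → ℂ) (p : ℝ × ℝ) : ℂ :=
  (2:ℂ)⁻¹ * (dd (1,0) w p - Complex.I * dd (0,1) w p)

lemma Sm.Dc' {w} (h : Sm w) : Sm (Dc w) := by
  have h1 := h.dd (1,0); have h2 := h.dd (0,1)
  intro q
  exact contDiffAt_const.mul ((h1 q).add (contDiffAt_const.mul (h2 q)))

lemma Sm.Db' {w} (h : Sm w) : Sm (Db w) := by
  have h1 := h.dd (1,0); have h2 := h.dd (0,1)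
  intro q
  exact contDiffAt_const.mul ((h1 q).sub (contDiffAt_const.mul (h2 q)))

lemma Dc_congr {w₁ w₂ : ℝ × ℝ → ℂ} (h : ∀ x, w₁ x = w₂ x) (p) :
    Dc w₁ p = Dc w₂ p := by
  unfold Dc; rw [dd_congr h, dd_congr h]

lemma Db_congr {w₁ w₂ : ℝ × ℝ → ℂ} (h : ∀ x, w₁ x = w₂ x) (p) :
    Db w₁ p = Db w₂ p := by
  unfold Db; rw [dd_congr h, dd_congr h]

lemma Dc_mul {f g : ℝ × ℝ → ℂ} {p} (hf : DifferentiableAt ℝ f p)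
    (hg : DifferentiableAt ℝ g p) :
    Dc (fun q => f q * g q) p = Dc f p * g p + f p * Dc g p := by
  unfold Dc; rw [dd_mul hf hg, dd_mul hf hg]; ring

lemma Db_mul {f g : ℝ × ℝ → ℂ} {p} (hf : DifferentiableAt ℝ f p)
    (hg : DifferentiableAt ℝ g p) :
    Db (fun q => f q * g q) p = Db f p * g p + f p * Db g p := by
  unfold Db; rw [dd_mul hf hg, dd_mul hf hg]; ring

lemma Dc_add {f g : ℝ × ℝ → ℂ} {p} (hf : DifferentiableAt ℝ f p)
    (hg : DifferentiableAt ℝ g p) :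
    Dc (fun q => f q + g q) p = Dc f p + Dc g p := by
  unfold Dc; rw [dd_add hf hg, dd_add hf hg]; ring

lemma Db_add {f g : ℝ × ℝ → ℂ} {p} (hf : DifferentiableAt ℝ f p)
    (hg : DifferentiableAt ℝ g p) :
    Db (fun q => f q + g q) p = Db f p + Db g p := by
  unfold Db; rw [dd_add hf hg, dd_add hf hg]; ring

lemma Dc_cmul {f : ℝ × ℝ → ℂ} {p} (hf : DifferentiableAt ℝ f p) (c : ℂ) :
    Dc (fun q => c * f q) p = c * Dc f p := by
  unfold Dc; rw [dd_cmul hf, dd_cmul hf]; ring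

lemma Db_cmul {f : ℝ × ℝ → ℂ} {p} (hf : DifferentiableAt ℝ f p) (c : ℂ) :
    Db (fun q => c * f q) p = c * Db f p := by
  unfold Db; rw [dd_cmul hf, dd_cmul hf]; ring

lemma Dc_conj {f : ℝ × ℝ → ℂ} {p} (hf : DifferentiableAt ℝ f p) :
    Dc (fun q => (starRingEnd ℂ) (f q)) p = (starRingEnd ℂ) (Db f p) := by
  unfold Dc Db; rw [dd_conj hf, dd_conj hf]
  simp only [map_mul, map_sub, map_add, map_inv₀, map_ofNat, Complex.conj_I]
  ring

lemma Db_conj {f : ℝ × ℝ → ℂ} {p} (hf : DifferentiableAt ℝ f p) :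
    Db (fun q => (starRingEnd ℂ) (f q)) p = (starRingEnd ℂ) (Dc f p) := by
  unfold Dc Db; rw [dd_conj hf, dd_conj hf]
  simp only [map_mul, map_sub, map_add, map_inv₀, map_ofNat, Complex.conj_I]
  ring

lemma dd_Dc {w} (h : Sm w) (v p) :
    dd v (Dc w) p = (2:ℂ)⁻¹ * (dd v (dd (1,0) w) p + Complex.I * dd v (dd (0,1) w) p) := by
  have e : Dc w = fun q => (2:ℂ)⁻¹ * (dd (1,0) w q + Complex.I * dd (0,1) w q) := rfl
  rw [e, dd_cmul (f := fun q => dd (1,0) w q + Complex.I * dd (0,1) w q) ((h.dd (1,0)).diffAt.add ((h.dd (0,1)).diffAt.const_mul _)) _ v,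
    dd_add (h.dd (1,0)).diffAt ((h.dd (0,1)).diffAt.const_mul _) v,
    dd_cmul (h.dd (0,1)).diffAt _ v]

lemma Dc_def (w : ℝ × ℝ → ℂ) (p) :
    Dc w p = (2:ℂ)⁻¹ * (dd (1,0) w p + Complex.I * dd (0,1) w p) := rfl
lemma Db_def (w : ℝ × ℝ → ℂ) (p) :
    Db w p = (2:ℂ)⁻¹ * (dd (1,0) w p - Complex.I * dd (0,1) w p) := rfl

lemma dd_Db {w} (h : Sm w) (v p) :
    dd v (Db w) p = (2:ℂ)⁻¹ * (dd v (dd (1,0) w) p - Complex.I * dd v (dd (0,1) w) p) := by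
  have e : Db w = fun q => (2:ℂ)⁻¹ * (dd (1,0) w q - Complex.I * dd (0,1) w q) := rfl
  rw [e, dd_cmul (f := fun q => dd (1,0) w q - Complex.I * dd (0,1) w q) ((h.dd (1,0)).diffAt.sub ((h.dd (0,1)).diffAt.const_mul _)) _ v,
    dd_sub (h.dd (1,0)).diffAt ((h.dd (0,1)).diffAt.const_mul _) v,
    dd_cmul (h.dd (0,1)).diffAt _ v]

lemma Db_Dc_comm {w} (h : Sm w) (p) : Db (Dc w) p = Dc (Db w) p := by
  rw [Db_def (Dc w), Dc_def (Db w), dd_Dc h, dd_Dc h, dd_Db h, dd_Db h,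
    dd_swap h (0,1) (1,0)]
  ring

def uc (τ₀ : ℝ × ℝ → ℝ) : ℝ × ℝ → ℂ := fun s => ((Real.log (Real.sqrt (τ₀ s)) : ℝ) : ℂ)

lemma uc_eq (τ₀ : ℝ × ℝ → ℝ) :
    uc τ₀ = fun s => ((Real.log (Real.sqrt (τ₀ s)) : ℝ) : ℂ) := rfl

section extract
variable {g : ℝ × ℝ → Quaternion ℂ} {τ₀ : ℝ × ℝ → ℝ} {Q₀ : ℝ × ℝ → ℂ} {p : ℝ × ℝ}

lemma extract1
    (hI : ∀ q, (g q).imI = Complex.I * (g q).re)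
    (hK : ∀ q, (g q).imK = Complex.I * (g q).imJ)
    (hR : DifferentiableAt ℝ (fun q => (g q).re) p)
    (hJ : DifferentiableAt ℝ (fun q => (g q).imJ) p)
    (heq : qdz g p = qdz (fun s => rQ (Real.log (Real.sqrt (τ₀ s)))) p * g p
        + (Real.sqrt (τ₀ p))⁻¹ • (cI (Q₀ p) * (Jq * qhat (g p) * Iq))) :
    Dc (fun q => (g q).re) p = Dc (uc τ₀) p * (g p).re
      + (((Real.sqrt (τ₀ p))⁻¹ : ℝ) : ℂ)
        * (Complex.I * ((starRingEnd ℂ) (Q₀ p) * (starRingEnd ℂ) ((g p).imJ))) := by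
  have E := congrArg QuaternionAlgebra.re heq
  have eI : ∀ v, fderiv ℝ (fun s => Complex.I * (g s).re) p v
      = Complex.I * fderiv ℝ (fun s => (g s).re) p v := by
    intro v; rw [fderiv_const_mul hR]; simp
  have eK : ∀ v, fderiv ℝ (fun s => Complex.I * (g s).imJ) p v
      = Complex.I * fderiv ℝ (fun s => (g s).imJ) p v := by
    intro v; rw [fderiv_const_mul hJ]; simp
  have hQre : ((Q₀ p).re : ℂ) = (starRingEnd ℂ) (Q₀ p) + Complex.I * ((Q₀ p).im : ℂ) := by
    simp [Complex.ext_iff]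
  simp only [qdz, Quaternion.re_smul, Quaternion.imI_smul, Quaternion.imJ_smul, Quaternion.imK_smul, Quaternion.re_sub, Quaternion.imI_sub, Quaternion.imJ_sub, Quaternion.imK_sub, Quaternion.re_add, Quaternion.imI_add, Quaternion.imJ_add, Quaternion.imK_add, Quaternion.re_mul, Quaternion.imI_mul, Quaternion.imJ_mul, Quaternion.imK_mul] at E
  simp only [qdz, qpd, rQ, cI, Iq, Jq, qhat, hI, hK, Quaternion.re_smul, Quaternion.re_sub,
    Quaternion.re_add, Quaternion.re_mul, Quaternion.imI_smul, Quaternion.imI_sub,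
    Quaternion.imI_add, Quaternion.imI_mul, Quaternion.imJ_smul, Quaternion.imJ_sub,
    Quaternion.imJ_add, Quaternion.imJ_mul, Quaternion.imK_smul, Quaternion.imK_sub,
    Quaternion.imK_add, Quaternion.imK_mul, smul_eq_mul, eI, eK, fderiv_fun_const,
    Pi.zero_apply, ContinuousLinearMap.zero_apply, map_mul, Complex.conj_I,
    Complex.real_smul] at E
  rw [hQre] at E
  simp only [Dc_def, dd, uc_eq]
  linear_combination E + (((Real.sqrt (τ₀ p))⁻¹ : ℝ) * ((Q₀ p).im : ℂ)
    * (starRingEnd ℂ) ((g p).imJ)) * Complex.I_sq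

lemma extract2
    (hI : ∀ q, (g q).imI = Complex.I * (g q).re)
    (hK : ∀ q, (g q).imK = Complex.I * (g q).imJ)
    (hR : DifferentiableAt ℝ (fun q => (g q).re) p)
    (hJ : DifferentiableAt ℝ (fun q => (g q).imJ) p)
    (heq : qdz g p = qdz (fun s => rQ (Real.log (Real.sqrt (τ₀ s)))) p * g p
        + (Real.sqrt (τ₀ p))⁻¹ • (cI (Q₀ p) * (Jq * qhat (g p) * Iq))) :
    Dc (fun q => (g q).imJ) p = Dc (uc τ₀) p * (g p).imJ
      + (((Real.sqrt (τ₀ p))⁻¹ : ℝ) : ℂ)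
        * (Complex.I * ((starRingEnd ℂ) (Q₀ p) * (starRingEnd ℂ) ((g p).re))) := by
  have E := congrArg QuaternionAlgebra.imJ heq
  have eI : ∀ v, fderiv ℝ (fun s => Complex.I * (g s).re) p v
      = Complex.I * fderiv ℝ (fun s => (g s).re) p v := by
    intro v; rw [fderiv_const_mul hR]; simp
  have eK : ∀ v, fderiv ℝ (fun s => Complex.I * (g s).imJ) p v
      = Complex.I * fderiv ℝ (fun s => (g s).imJ) p v := by
    intro v; rw [fderiv_const_mul hJ]; simp
  have hQre : ((Q₀ p).re : ℂ) = (starRingEnd ℂ) (Q₀ p) + Complex.I * ((Q₀ p).im : ℂ) := by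
    simp [Complex.ext_iff]
  simp only [qdz, Quaternion.re_smul, Quaternion.imI_smul, Quaternion.imJ_smul, Quaternion.imK_smul, Quaternion.re_sub, Quaternion.imI_sub, Quaternion.imJ_sub, Quaternion.imK_sub, Quaternion.re_add, Quaternion.imI_add, Quaternion.imJ_add, Quaternion.imK_add, Quaternion.re_mul, Quaternion.imI_mul, Quaternion.imJ_mul, Quaternion.imK_mul] at E
  simp only [qdz, qpd, rQ, cI, Iq, Jq, qhat, hI, hK, Quaternion.re_smul, Quaternion.re_sub,
    Quaternion.re_add, Quaternion.re_mul, Quaternion.imI_smul, Quaternion.imI_sub,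
    Quaternion.imI_add, Quaternion.imI_mul, Quaternion.imJ_smul, Quaternion.imJ_sub,
    Quaternion.imJ_add, Quaternion.imJ_mul, Quaternion.imK_smul, Quaternion.imK_sub,
    Quaternion.imK_add, Quaternion.imK_mul, smul_eq_mul, eI, eK, fderiv_fun_const,
    Pi.zero_apply, ContinuousLinearMap.zero_apply, map_mul, Complex.conj_I,
    Complex.real_smul] at E
  rw [hQre] at E
  simp only [Dc_def, dd, uc_eq]
  linear_combination E + (((Real.sqrt (τ₀ p))⁻¹ : ℝ) * ((Q₀ p).im : ℂ)
    * (starRingEnd ℂ) ((g p).re)) * Complex.I_sq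

lemma extract3
    (hI : ∀ q, (g q).imI = Complex.I * (g q).re)
    (hK : ∀ q, (g q).imK = Complex.I * (g q).imJ)
    (hR : DifferentiableAt ℝ (fun q => (g q).re) p)
    (hJ : DifferentiableAt ℝ (fun q => (g q).imJ) p)
    (heq : qdzbar g p = (Real.sqrt (τ₀ p) / 4) • (Jq * qhat (g p) * Iq)) :
    Db (fun q => (g q).re) p
      = ((4:ℂ)⁻¹ * Complex.I) * (((Real.sqrt (τ₀ p) : ℝ) : ℂ)
          * (starRingEnd ℂ) ((g p).imJ)) := by
  have E := congrArg QuaternionAlgebra.re heq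
  have eI : ∀ v, fderiv ℝ (fun s => Complex.I * (g s).re) p v
      = Complex.I * fderiv ℝ (fun s => (g s).re) p v := by
    intro v; rw [fderiv_const_mul hR]; simp
  have eK : ∀ v, fderiv ℝ (fun s => Complex.I * (g s).imJ) p v
      = Complex.I * fderiv ℝ (fun s => (g s).imJ) p v := by
    intro v; rw [fderiv_const_mul hJ]; simp
  simp only [qdzbar, Quaternion.re_smul, Quaternion.imI_smul, Quaternion.imJ_smul, Quaternion.imK_smul, Quaternion.re_sub, Quaternion.imI_sub, Quaternion.imJ_sub, Quaternion.imK_sub, Quaternion.re_add, Quaternion.imI_add, Quaternion.imJ_add, Quaternion.imK_add, Quaternion.re_mul, Quaternion.imI_mul, Quaternion.imJ_mul, Quaternion.imK_mul] at E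
  simp only [qdzbar, qpd, Iq, Jq, qhat, hI, hK, Quaternion.re_smul, Quaternion.re_sub,
    Quaternion.re_add, Quaternion.re_mul, Quaternion.imI_smul, Quaternion.imI_sub,
    Quaternion.imI_add, Quaternion.imI_mul, Quaternion.imJ_smul, Quaternion.imJ_sub,
    Quaternion.imJ_add, Quaternion.imJ_mul, Quaternion.imK_smul, Quaternion.imK_sub,
    Quaternion.imK_add, Quaternion.imK_mul, smul_eq_mul, eI, eK, map_mul,
    Complex.conj_I, Complex.real_smul] at E
  simp only [Db_def, dd]
  push_cast at E ⊢
  linear_combination E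

lemma extract4
    (hI : ∀ q, (g q).imI = Complex.I * (g q).re)
    (hK : ∀ q, (g q).imK = Complex.I * (g q).imJ)
    (hR : DifferentiableAt ℝ (fun q => (g q).re) p)
    (hJ : DifferentiableAt ℝ (fun q => (g q).imJ) p)
    (heq : qdzbar g p = (Real.sqrt (τ₀ p) / 4) • (Jq * qhat (g p) * Iq)) :
    Db (fun q => (g q).imJ) p
      = ((4:ℂ)⁻¹ * Complex.I) * (((Real.sqrt (τ₀ p) : ℝ) : ℂ)
          * (starRingEnd ℂ) ((g p).re)) := by
  have E := congrArg QuaternionAlgebra.imJ heq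
  have eI : ∀ v, fderiv ℝ (fun s => Complex.I * (g s).re) p v
      = Complex.I * fderiv ℝ (fun s => (g s).re) p v := by
    intro v; rw [fderiv_const_mul hR]; simp
  have eK : ∀ v, fderiv ℝ (fun s => Complex.I * (g s).imJ) p v
      = Complex.I * fderiv ℝ (fun s => (g s).imJ) p v := by
    intro v; rw [fderiv_const_mul hJ]; simp
  simp only [qdzbar, Quaternion.re_smul, Quaternion.imI_smul, Quaternion.imJ_smul, Quaternion.imK_smul, Quaternion.re_sub, Quaternion.imI_sub, Quaternion.imJ_sub, Quaternion.imK_sub, Quaternion.re_add, Quaternion.imI_add, Quaternion.imJ_add, Quaternion.imK_add, Quaternion.re_mul, Quaternion.imI_mul, Quaternion.imJ_mul, Quaternion.imK_mul] at E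
  simp only [qdzbar, qpd, Iq, Jq, qhat, hI, hK, Quaternion.re_smul, Quaternion.re_sub,
    Quaternion.re_add, Quaternion.re_mul, Quaternion.imI_smul, Quaternion.imI_sub,
    Quaternion.imI_add, Quaternion.imI_mul, Quaternion.imJ_smul, Quaternion.imJ_sub,
    Quaternion.imJ_add, Quaternion.imJ_mul, Quaternion.imK_smul, Quaternion.imK_sub,
    Quaternion.imK_add, Quaternion.imK_mul, smul_eq_mul, eI, eK, map_mul,
    Complex.conj_I, Complex.real_smul] at E
  simp only [Db_def, dd]
  push_cast at E ⊢
  linear_combination E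

lemma goal1_extract (hQd : DifferentiableAt ℝ Q₀ p) (h0 : Dc Q₀ p = 0) :
    qdzbar (fun s => cI (Q₀ s)) p = 0 := by
  have hQre : DifferentiableAt ℝ (fun s => (Q₀ s).re) p :=
    (Complex.reCLM.differentiableAt).comp p hQd
  have hQim : DifferentiableAt ℝ (fun s => (Q₀ s).im) p :=
    (Complex.imCLM.differentiableAt).comp p hQd
  have hre : ∀ v, fderiv ℝ (fun s => (cI (Q₀ s)).re) p v = (((dd v Q₀ p).re : ℝ) : ℂ) := by
    intro v
    have e : (fun s => (cI (Q₀ s)).re) = fun s => (((Q₀ s).re : ℝ) : ℂ) := rfl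
    rw [e]
    have := dd_ofReal (f := fun s => (Q₀ s).re) hQre v (p := p)
    unfold dd at this
    rw [this, fderiv_re hQd]
  have him : ∀ v, fderiv ℝ (fun s => (cI (Q₀ s)).imI) p v = (((dd v Q₀ p).im : ℝ) : ℂ) := by
    intro v
    have e : (fun s => (cI (Q₀ s)).imI) = fun s => (((Q₀ s).im : ℝ) : ℂ) := rfl
    rw [e]
    have := dd_ofReal (f := fun s => (Q₀ s).im) hQim v (p := p)
    unfold dd at this
    rw [this, fderiv_im hQd]
  have hxy : dd (1,0) Q₀ p = -Complex.I * dd (0,1) Q₀ p := by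
    rw [Dc_def] at h0; linear_combination 2 * h0
  have hc1 : (((dd (1,0) Q₀ p).re : ℝ) : ℂ) = (((dd (0,1) Q₀ p).im : ℝ) : ℂ) := by
    rw [hxy]; simp
  have hc2 : (((dd (1,0) Q₀ p).im : ℝ) : ℂ) = -(((dd (0,1) Q₀ p).re : ℝ) : ℂ) := by
    rw [hxy]; push_cast; simp
  rw [Quaternion.ext_iff]
  simp only [qdzbar, Quaternion.re_smul, Quaternion.imI_smul, Quaternion.imJ_smul, Quaternion.imK_smul, Quaternion.re_sub, Quaternion.imI_sub, Quaternion.imJ_sub, Quaternion.imK_sub, Quaternion.re_add, Quaternion.imI_add, Quaternion.imJ_add, Quaternion.imK_add, Quaternion.re_mul, Quaternion.imI_mul, Quaternion.imJ_mul, Quaternion.imK_mul]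
  refine ⟨?_, ?_, ?_, ?_⟩ <;>
    simp only [qdzbar, qpd, Iq, Quaternion.re_smul, Quaternion.re_add, Quaternion.re_mul,
      Quaternion.imI_smul, Quaternion.imI_add, Quaternion.imI_mul,
      Quaternion.imJ_smul, Quaternion.imJ_add, Quaternion.imJ_mul,
      Quaternion.imK_smul, Quaternion.imK_add, Quaternion.imK_mul,
      smul_eq_mul, hre, him, Quaternion.re_zero, Quaternion.imI_zero,
      Quaternion.imJ_zero, Quaternion.imK_zero]
  · rw [show (fun s => (cI (Q₀ s)).imJ) = (fun _ => (0:ℂ)) from rfl]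
    simp only [fderiv_fun_const, Pi.zero_apply, ContinuousLinearMap.zero_apply]
    linear_combination ((2:ℂ)⁻¹) * hc1
  · rw [show (fun s => (cI (Q₀ s)).imJ) = (fun _ => (0:ℂ)) from rfl]
    simp only [fderiv_fun_const, Pi.zero_apply, ContinuousLinearMap.zero_apply]
    linear_combination ((2:ℂ)⁻¹) * hc2
  · rw [show (fun s => (cI (Q₀ s)).imJ) = (fun _ => (0:ℂ)) from rfl,
      show (fun s => (cI (Q₀ s)).imK) = (fun _ => (0:ℂ)) from rfl]
    simp [fderiv_fun_const]
  · rw [show (fun s => (cI (Q₀ s)).imJ) = (fun _ => (0:ℂ)) from rfl,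
      show (fun s => (cI (Q₀ s)).imK) = (fun _ => (0:ℂ)) from rfl]
    simp [fderiv_fun_const]


lemma goal2_extract (τ₀ : ℝ × ℝ → ℝ) (hSu : Sm (uc τ₀)) (p : ℝ × ℝ) :
    qdz (fun s => qdzbar (fun r => rQ (Real.log (Real.sqrt (τ₀ r)))) s) p
    = (⟨(4:ℂ)⁻¹ * (dd (1,0) (dd (1,0) (uc τ₀)) p + dd (0,1) (dd (0,1) (uc τ₀)) p),
        0, 0, 0⟩ : Quaternion ℂ) := by
  have hre : ∀ s, ((qdzbar (fun r => rQ (Real.log (Real.sqrt (τ₀ r)))) s)).re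
      = (2:ℂ)⁻¹ * dd (1,0) (uc τ₀) s := by
    intro s
    simp only [qdzbar, Quaternion.re_smul, Quaternion.imI_smul, Quaternion.imJ_smul, Quaternion.imK_smul, Quaternion.re_sub, Quaternion.imI_sub, Quaternion.imJ_sub, Quaternion.imK_sub, Quaternion.re_add, Quaternion.imI_add, Quaternion.imJ_add, Quaternion.imK_add, Quaternion.re_mul, Quaternion.imI_mul, Quaternion.imJ_mul, Quaternion.imK_mul]
    simp only [qdzbar, qpd, rQ, Iq, Quaternion.re_smul, Quaternion.re_add, Quaternion.re_mul,
      smul_eq_mul, fderiv_fun_const, Pi.zero_apply, ContinuousLinearMap.zero_apply]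
    simp only [dd, uc_eq]; ring
  have him : ∀ s, ((qdzbar (fun r => rQ (Real.log (Real.sqrt (τ₀ r)))) s)).imI
      = (2:ℂ)⁻¹ * dd (0,1) (uc τ₀) s := by
    intro s
    simp only [qdzbar, Quaternion.re_smul, Quaternion.imI_smul, Quaternion.imJ_smul, Quaternion.imK_smul, Quaternion.re_sub, Quaternion.imI_sub, Quaternion.imJ_sub, Quaternion.imK_sub, Quaternion.re_add, Quaternion.imI_add, Quaternion.imJ_add, Quaternion.imK_add, Quaternion.re_mul, Quaternion.imI_mul, Quaternion.imJ_mul, Quaternion.imK_mul]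
    simp only [qdzbar, qpd, rQ, Iq, Quaternion.imI_smul, Quaternion.imI_add, Quaternion.imI_mul,
      smul_eq_mul, fderiv_fun_const, Pi.zero_apply, ContinuousLinearMap.zero_apply]
    simp only [dd, uc_eq]; ring
  have hjm : ∀ s, ((qdzbar (fun r => rQ (Real.log (Real.sqrt (τ₀ r)))) s)).imJ = 0 := by
    intro s
    simp only [qdzbar, Quaternion.re_smul, Quaternion.imI_smul, Quaternion.imJ_smul, Quaternion.imK_smul, Quaternion.re_sub, Quaternion.imI_sub, Quaternion.imJ_sub, Quaternion.imK_sub, Quaternion.re_add, Quaternion.imI_add, Quaternion.imJ_add, Quaternion.imK_add, Quaternion.re_mul, Quaternion.imI_mul, Quaternion.imJ_mul, Quaternion.imK_mul]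
    simp only [qdzbar, qpd, rQ, Iq, Quaternion.imJ_smul, Quaternion.imJ_add, Quaternion.imJ_mul,
      smul_eq_mul, fderiv_fun_const, Pi.zero_apply, ContinuousLinearMap.zero_apply]
    ring
  have hkm : ∀ s, ((qdzbar (fun r => rQ (Real.log (Real.sqrt (τ₀ r)))) s)).imK = 0 := by
    intro s
    simp only [qdzbar, Quaternion.re_smul, Quaternion.imI_smul, Quaternion.imJ_smul, Quaternion.imK_smul, Quaternion.re_sub, Quaternion.imI_sub, Quaternion.imJ_sub, Quaternion.imK_sub, Quaternion.re_add, Quaternion.imI_add, Quaternion.imJ_add, Quaternion.imK_add, Quaternion.re_mul, Quaternion.imI_mul, Quaternion.imJ_mul, Quaternion.imK_mul]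
    simp only [qdzbar, qpd, rQ, Iq, Quaternion.imK_smul, Quaternion.imK_add, Quaternion.imK_mul,
      smul_eq_mul, fderiv_fun_const, Pi.zero_apply, ContinuousLinearMap.zero_apply]
    ring
  have kre : ∀ v, fderiv ℝ (fun s => ((qdzbar (fun r => rQ (Real.log (Real.sqrt (τ₀ r)))) s)).re) p v
      = (2:ℂ)⁻¹ * dd v (dd (1,0) (uc τ₀)) p := by
    intro v
    rw [show (fun s => ((qdzbar (fun r => rQ (Real.log (Real.sqrt (τ₀ r)))) s)).re)
        = (fun s => (2:ℂ)⁻¹ * dd (1,0) (uc τ₀) s) from funext hre]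
    have := dd_cmul (hSu.dd (1,0)).diffAt ((2:ℂ)⁻¹) v (p := p)
    unfold dd at this ⊢
    exact this
  have kim : ∀ v, fderiv ℝ (fun s => ((qdzbar (fun r => rQ (Real.log (Real.sqrt (τ₀ r)))) s)).imI) p v
      = (2:ℂ)⁻¹ * dd v (dd (0,1) (uc τ₀)) p := by
    intro v
    rw [show (fun s => ((qdzbar (fun r => rQ (Real.log (Real.sqrt (τ₀ r)))) s)).imI)
        = (fun s => (2:ℂ)⁻¹ * dd (0,1) (uc τ₀) s) from funext him]
    have := dd_cmul (hSu.dd (0,1)).diffAt ((2:ℂ)⁻¹) v (p := p)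
    unfold dd at this ⊢
    exact this
  have hswap := dd_swap hSu (0,1) (1,0) p
  apply Quaternion.ext_iff.2
  simp only [qdz, Quaternion.re_smul, Quaternion.imI_smul, Quaternion.imJ_smul, Quaternion.imK_smul, Quaternion.re_sub, Quaternion.imI_sub, Quaternion.imJ_sub, Quaternion.imK_sub, Quaternion.re_add, Quaternion.imI_add, Quaternion.imJ_add, Quaternion.imK_add, Quaternion.re_mul, Quaternion.imI_mul, Quaternion.imJ_mul, Quaternion.imK_mul]
  refine ⟨?_, ?_, ?_, ?_⟩ <;>
    simp only [qdz, qpd, Iq, Quaternion.re_smul, Quaternion.re_sub, Quaternion.re_mul,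
      Quaternion.imI_smul, Quaternion.imI_sub, Quaternion.imI_mul,
      Quaternion.imJ_smul, Quaternion.imJ_sub, Quaternion.imJ_mul,
      Quaternion.imK_smul, Quaternion.imK_sub, Quaternion.imK_mul, smul_eq_mul, kre, kim]
  · ring
  · rw [show (fun s => ((qdzbar (fun r => rQ (Real.log (Real.sqrt (τ₀ r)))) s)).imJ)
        = (fun _ => (0:ℂ)) from funext hjm,
      show (fun s => ((qdzbar (fun r => rQ (Real.log (Real.sqrt (τ₀ r)))) s)).imK)
        = (fun _ => (0:ℂ)) from funext hkm]
    simp only [fderiv_fun_const, Pi.zero_apply, ContinuousLinearMap.zero_apply]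
    linear_combination (-(4:ℂ)⁻¹) * hswap
  · rw [show (fun s => ((qdzbar (fun r => rQ (Real.log (Real.sqrt (τ₀ r)))) s)).imJ)
        = (fun _ => (0:ℂ)) from funext hjm,
      show (fun s => ((qdzbar (fun r => rQ (Real.log (Real.sqrt (τ₀ r)))) s)).imK)
        = (fun _ => (0:ℂ)) from funext hkm]
    simp [fderiv_fun_const]
  · rw [show (fun s => ((qdzbar (fun r => rQ (Real.log (Real.sqrt (τ₀ r)))) s)).imJ)
        = (fun _ => (0:ℂ)) from funext hjm,
      show (fun s => ((qdzbar (fun r => rQ (Real.log (Real.sqrt (τ₀ r)))) s)).imK)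
        = (fun _ => (0:ℂ)) from funext hkm]
    simp [fderiv_fun_const]

end extract
end S10

open S10

/-- If `g : ℝ² → L` is smooth with `|g|²` nowhere vanishing and satisfies
the `g`-system for smooth data `τ₀ : ℝ² → (0,∞)`, `Q₀ : ℝ² → ℂ_I`, then `∂_z̄ Q₀ = 0`
(`Q₀` is `I`-holomorphic) and `∂_z(∂_z̄(log √τ₀)) = −|Q₀|²/τ₀ + τ₀/16`. -/
theorem stmt10 (τ₀ : ℝ × ℝ → ℝ) (Q₀ : ℝ × ℝ → ℂ)
    (hτ : ContDiff ℝ (⊤ : ℕ∞) τ₀) (hτpos : ∀ p, 0 < τ₀ p)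
    (hQ : ContDiff ℝ (⊤ : ℕ∞) Q₀)
    (g : ℝ × ℝ → Quaternion ℂ) (hgs : QSmooth g) (hgL : ∀ p, g p ∈ Lset)
    (hgnz : ∀ p, LnormSq (g p) ≠ 0) (hsys : GSystem τ₀ Q₀ g) :
    (∀ p, qdzbar (fun s => cI (Q₀ s)) p = 0) ∧
    (∀ p, qdz (fun s => qdzbar (fun r => rQ (Real.log (Real.sqrt (τ₀ r)))) s) p
        = rQ (-(Complex.normSq (Q₀ p)) / τ₀ p + τ₀ p / 16)) := by
  obtain ⟨hs1, hs2, hs3, hs4⟩ := hgs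
  have hI : ∀ q, (g q).imI = Complex.I * (g q).re := by
    intro q; obtain ⟨a, b, hab⟩ := hgL q
    rw [hab]
    simp [Quaternion.re_smul, Quaternion.imI_smul, Quaternion.re_mul,
      Quaternion.imI_mul, smul_eq_mul]
    ring
  have hK : ∀ q, (g q).imK = Complex.I * (g q).imJ := by
    intro q; obtain ⟨a, b, hab⟩ := hgL q
    rw [hab]
    simp [Quaternion.imJ_smul, Quaternion.imK_smul, Quaternion.imJ_mul,
      Quaternion.imK_mul, smul_eq_mul]
    ring
  have hSR : Sm (fun q => (g q).re) := fun q => hs1.contDiffAt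
  have hSJ : Sm (fun q => (g q).imJ) := fun q => hs3.contDiffAt
  have hSQ : Sm Q₀ := fun q => hQ.contDiffAt
  have hSQb : Sm (fun q => (starRingEnd ℂ) (Q₀ q)) := hSQ.conj
  have hSRb : Sm (fun q => (starRingEnd ℂ) ((g q).re)) := hSR.conj
  have hSJb : Sm (fun q => (starRingEnd ℂ) ((g q).imJ)) := hSJ.conj
  have hτne : ∀ q, τ₀ q ≠ 0 := fun q => (hτpos q).ne'
  have hsne : ∀ q, Real.sqrt (τ₀ q) ≠ 0 := fun q => (Real.sqrt_pos.2 (hτpos q)).ne'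
  have hsmσR : ∀ q, ContDiffAt ℝ SM (fun x => Real.sqrt (τ₀ x)) q := fun q =>
    (Real.contDiffAt_sqrt (hτne q)).comp q hτ.contDiffAt
  have hSσ : Sm (fun q => ((Real.sqrt (τ₀ q) : ℝ) : ℂ)) := fun q =>
    (Complex.ofRealCLM.contDiff.contDiffAt).comp q (hsmσR q)
  have hsmu : ∀ q, ContDiffAt ℝ SM (fun x => Real.log (Real.sqrt (τ₀ x))) q := fun q =>
    ContDiffAt.comp (g := Real.log) q (Real.contDiffAt_log.2 (hsne q)) (hsmσR q)
  have hSu : Sm (uc τ₀) := fun q => by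
    rw [uc_eq]
    exact (Complex.ofRealCLM.contDiff.contDiffAt).comp q (hsmu q)
  set σ : ℝ × ℝ → ℂ := fun q => ((Real.sqrt (τ₀ q) : ℝ) : ℂ) with hσdef
  have hσne : ∀ q, σ q ≠ 0 := fun q => Complex.ofReal_ne_zero.2 (hsne q)
  have hσconj : ∀ q, (starRingEnd ℂ) (σ q) = σ q := fun q => Complex.conj_ofReal _
  have hsq : ∀ q, σ q * σ q = ((τ₀ q : ℝ) : ℂ) := by
    intro q
    rw [hσdef, ← Complex.ofReal_mul, Real.mul_self_sqrt (hτpos q).le]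
  have hdu : ∀ v q, σ q * dd v (uc τ₀) q = dd v σ q := by
    intro v q
    have hdσ : DifferentiableAt ℝ (fun x => Real.sqrt (τ₀ x)) q :=
      (hsmσR q).differentiableAt (by simp [SM])
    have hlog : HasFDerivAt (fun x => Real.log (Real.sqrt (τ₀ x)))
        ((Real.sqrt (τ₀ q))⁻¹ • fderiv ℝ (fun x => Real.sqrt (τ₀ x)) q) q :=
      HasDerivAt.comp_hasFDerivAt (h₂ := Real.log) q (Real.hasDerivAt_log (hsne q)) hdσ.hasFDerivAt
    have hdlog : DifferentiableAt ℝ (fun x => Real.log (Real.sqrt (τ₀ x))) q :=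
      hlog.differentiableAt
    have e1 : dd v (uc τ₀) q
        = (((Real.sqrt (τ₀ q))⁻¹ * fderiv ℝ (fun x => Real.sqrt (τ₀ x)) q v : ℝ) : ℂ) := by
      rw [uc_eq, dd_ofReal hdlog v, hlog.fderiv]
      simp [smul_eq_mul]
    have e2 : dd v σ q = ((fderiv ℝ (fun x => Real.sqrt (τ₀ x)) q v : ℝ) : ℂ) := by
      rw [hσdef, dd_ofReal hdσ v]
    rw [e1, e2, hσdef, ← Complex.ofReal_mul]
    congr 1
    rw [← mul_assoc, mul_inv_cancel₀ (hsne q), one_mul]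
  have hduDc : ∀ q, σ q * Dc (uc τ₀) q = Dc σ q := by
    intro q; rw [Dc_def, Dc_def]
    linear_combination (2:ℂ)⁻¹ * hdu (1,0) q + ((2:ℂ)⁻¹*Complex.I) * hdu (0,1) q
  have hduDb : ∀ q, σ q * Db (uc τ₀) q = Db σ q := by
    intro q; rw [Db_def, Db_def]
    linear_combination (2:ℂ)⁻¹ * hdu (1,0) q - ((2:ℂ)⁻¹*Complex.I) * hdu (0,1) q
  have hconjDcσ : ∀ q, (starRingEnd ℂ) (Dc σ q) = Db σ q := by
    intro q
    rw [← Db_conj hSσ.diffAt]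
    exact Db_congr (fun x => hσconj x) q
  have hconjDbσ : ∀ q, (starRingEnd ℂ) (Db σ q) = Dc σ q := by
    intro q
    rw [← Dc_conj hSσ.diffAt]
    exact Dc_congr (fun x => hσconj x) q
  -- the scalar system
  have h1 : ∀ q, σ q * Dc (fun x => (g x).re) q = Dc σ q * (g q).re
      + Complex.I * ((starRingEnd ℂ) (Q₀ q) * (starRingEnd ℂ) ((g q).imJ)) := by
    intro q
    have e := extract1 hI hK hSR.diffAt hSJ.diffAt ((hsys q).1)
    have hc : σ q * ((((Real.sqrt (τ₀ q))⁻¹ : ℝ)) : ℂ) = 1 := by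
      rw [hσdef, ← Complex.ofReal_mul, mul_inv_cancel₀ (hsne q)]; simp
    linear_combination σ q * e + (g q).re * hduDc q
      + (Complex.I * ((starRingEnd ℂ) (Q₀ q) * (starRingEnd ℂ) ((g q).imJ))) * hc
  have h2 : ∀ q, σ q * Dc (fun x => (g x).imJ) q = Dc σ q * (g q).imJ
      + Complex.I * ((starRingEnd ℂ) (Q₀ q) * (starRingEnd ℂ) ((g q).re)) := by
    intro q
    have e := extract2 hI hK hSR.diffAt hSJ.diffAt ((hsys q).1)
    have hc : σ q * ((((Real.sqrt (τ₀ q))⁻¹ : ℝ)) : ℂ) = 1 := by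
      rw [hσdef, ← Complex.ofReal_mul, mul_inv_cancel₀ (hsne q)]; simp
    linear_combination σ q * e + (g q).imJ * hduDc q
      + (Complex.I * ((starRingEnd ℂ) (Q₀ q) * (starRingEnd ℂ) ((g q).re))) * hc
  have h3 : ∀ q, Db (fun x => (g x).re) q
      = ((4:ℂ)⁻¹ * Complex.I) * (σ q * (starRingEnd ℂ) ((g q).imJ)) :=
    fun q => extract3 hI hK hSR.diffAt hSJ.diffAt ((hsys q).2)
  have h4 : ∀ q, Db (fun x => (g x).imJ) q
      = ((4:ℂ)⁻¹ * Complex.I) * (σ q * (starRingEnd ℂ) ((g q).re)) :=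
    fun q => extract4 hI hK hSR.diffAt hSJ.diffAt ((hsys q).2)
  -- conjugated equations
  have h1c : ∀ q, σ q * Db (fun x => (starRingEnd ℂ) ((g x).re)) q
      = Db σ q * (starRingEnd ℂ) ((g q).re) - Complex.I * (Q₀ q * (g q).imJ) := by
    intro q
    have e := congrArg (starRingEnd ℂ) (h1 q)
    simp only [map_mul, map_add, Complex.conj_I, Complex.conj_conj] at e
    rw [hσconj q, hconjDcσ q, ← Db_conj hSR.diffAt] at e
    linear_combination e
  have h2c : ∀ q, σ q * Db (fun x => (starRingEnd ℂ) ((g x).imJ)) q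
      = Db σ q * (starRingEnd ℂ) ((g q).imJ) - Complex.I * (Q₀ q * (g q).re) := by
    intro q
    have e := congrArg (starRingEnd ℂ) (h2 q)
    simp only [map_mul, map_add, Complex.conj_I, Complex.conj_conj] at e
    rw [hσconj q, hconjDcσ q, ← Db_conj hSJ.diffAt] at e
    linear_combination e
  have h3c : ∀ q, Dc (fun x => (starRingEnd ℂ) ((g x).re)) q
      = (-((4:ℂ)⁻¹ * Complex.I)) * (σ q * (g q).imJ) := by
    intro q
    have e := congrArg (starRingEnd ℂ) (h3 q)
    simp only [map_mul, map_inv₀, map_ofNat, Complex.conj_I, Complex.conj_conj] at e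
    rw [hσconj q, ← Dc_conj hSR.diffAt] at e
    linear_combination e
  have h4c : ∀ q, Dc (fun x => (starRingEnd ℂ) ((g x).imJ)) q
      = (-((4:ℂ)⁻¹ * Complex.I)) * (σ q * (g q).re) := by
    intro q
    have e := congrArg (starRingEnd ℂ) (h4 q)
    simp only [map_mul, map_inv₀, map_ofNat, Complex.conj_I, Complex.conj_conj] at e
    rw [hσconj q, ← Dc_conj hSJ.diffAt] at e
    linear_combination e
  -- the key pointwise consequences
  have key : ∀ p, (Db σ p * Dc σ p + (σ p)^4/16 - σ p * Db (Dc σ) p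
        - Q₀ p * (starRingEnd ℂ) (Q₀ p) = 0)
      ∧ Db (fun x => (starRingEnd ℂ) (Q₀ x)) p = 0 := by
    intro p
    have F0 : Db σ p * Dc (fun x => (g x).re) p + σ p * Db (Dc (fun x => (g x).re)) p
        = Db (Dc σ) p * (g p).re + Dc σ p * Db (fun x => (g x).re) p
          + Complex.I * (Db (fun x => (starRingEnd ℂ) (Q₀ x)) p * (starRingEnd ℂ) ((g p).imJ)
            + (starRingEnd ℂ) (Q₀ p) * Db (fun x => (starRingEnd ℂ) ((g x).imJ)) p) := by
      calc Db σ p * Dc (fun x => (g x).re) p + σ p * Db (Dc (fun x => (g x).re)) p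
          = Db (fun q => σ q * Dc (fun x => (g x).re) q) p :=
            (Db_mul hSσ.diffAt hSR.Dc'.diffAt).symm
        _ = Db (fun q => Dc σ q * (g q).re
              + Complex.I * ((starRingEnd ℂ) (Q₀ q) * (starRingEnd ℂ) ((g q).imJ))) p :=
            Db_congr h1 p
        _ = Db (fun q => Dc σ q * (g q).re) p
              + Db (fun q => Complex.I * ((starRingEnd ℂ) (Q₀ q) * (starRingEnd ℂ) ((g q).imJ))) p :=
            Db_add (hSσ.Dc'.diffAt.mul hSR.diffAt)
              ((hSQb.diffAt.mul hSJb.diffAt).const_mul _)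
        _ = _ := by
            rw [Db_mul hSσ.Dc'.diffAt hSR.diffAt, Db_cmul (f := fun q => (starRingEnd ℂ) (Q₀ q) * (starRingEnd ℂ) ((g q).imJ)) (hSQb.diffAt.mul hSJb.diffAt),
              Db_mul hSQb.diffAt hSJb.diffAt]
    have F2 : Db (Dc (fun x => (g x).re)) p
        = ((4:ℂ)⁻¹*Complex.I) * (Dc σ p * (starRingEnd ℂ) ((g p).imJ)
            + σ p * Dc (fun x => (starRingEnd ℂ) ((g x).imJ)) p) := by
      calc Db (Dc (fun x => (g x).re)) p = Dc (Db (fun x => (g x).re)) p := Db_Dc_comm hSR p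
        _ = Dc (fun q => ((4:ℂ)⁻¹*Complex.I) * (σ q * (starRingEnd ℂ) ((g q).imJ))) p :=
            Dc_congr h3 p
        _ = ((4:ℂ)⁻¹*Complex.I) * Dc (fun q => σ q * (starRingEnd ℂ) ((g q).imJ)) p :=
            Dc_cmul (hSσ.diffAt.mul hSJb.diffAt) _
        _ = _ := by rw [Dc_mul hSσ.diffAt hSJb.diffAt]
    have EA : (Db σ p * Dc σ p + (σ p)^4/16 - σ p * Db (Dc σ) p
          - Q₀ p * (starRingEnd ℂ) (Q₀ p)) * (g p).re
        - Complex.I * σ p * Db (fun x => (starRingEnd ℂ) (Q₀ x)) p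
          * (starRingEnd ℂ) ((g p).imJ) = 0 := by
      linear_combination σ p * F0 - Db σ p * h1 p - (σ p)^2 * F2
        - (Complex.I*(σ p)^3/4) * h4c p + σ p * Dc σ p * h3 p
        + Complex.I * (starRingEnd ℂ) (Q₀ p) * h2c p
        + ((σ p)^4 * (g p).re/16 - Q₀ p * (starRingEnd ℂ) (Q₀ p) * (g p).re) * Complex.I_sq
    have F0' : Db σ p * Dc (fun x => (g x).imJ) p + σ p * Db (Dc (fun x => (g x).imJ)) p
        = Db (Dc σ) p * (g p).imJ + Dc σ p * Db (fun x => (g x).imJ) p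
          + Complex.I * (Db (fun x => (starRingEnd ℂ) (Q₀ x)) p * (starRingEnd ℂ) ((g p).re)
            + (starRingEnd ℂ) (Q₀ p) * Db (fun x => (starRingEnd ℂ) ((g x).re)) p) := by
      calc Db σ p * Dc (fun x => (g x).imJ) p + σ p * Db (Dc (fun x => (g x).imJ)) p
          = Db (fun q => σ q * Dc (fun x => (g x).imJ) q) p :=
            (Db_mul hSσ.diffAt hSJ.Dc'.diffAt).symm
        _ = Db (fun q => Dc σ q * (g q).imJ
              + Complex.I * ((starRingEnd ℂ) (Q₀ q) * (starRingEnd ℂ) ((g q).re))) p :=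
            Db_congr h2 p
        _ = Db (fun q => Dc σ q * (g q).imJ) p
              + Db (fun q => Complex.I * ((starRingEnd ℂ) (Q₀ q) * (starRingEnd ℂ) ((g q).re))) p :=
            Db_add (hSσ.Dc'.diffAt.mul hSJ.diffAt)
              ((hSQb.diffAt.mul hSRb.diffAt).const_mul _)
        _ = _ := by
            rw [Db_mul hSσ.Dc'.diffAt hSJ.diffAt, Db_cmul (f := fun q => (starRingEnd ℂ) (Q₀ q) * (starRingEnd ℂ) ((g q).re)) (hSQb.diffAt.mul hSRb.diffAt),
              Db_mul hSQb.diffAt hSRb.diffAt]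
    have F2' : Db (Dc (fun x => (g x).imJ)) p
        = ((4:ℂ)⁻¹*Complex.I) * (Dc σ p * (starRingEnd ℂ) ((g p).re)
            + σ p * Dc (fun x => (starRingEnd ℂ) ((g x).re)) p) := by
      calc Db (Dc (fun x => (g x).imJ)) p = Dc (Db (fun x => (g x).imJ)) p := Db_Dc_comm hSJ p
        _ = Dc (fun q => ((4:ℂ)⁻¹*Complex.I) * (σ q * (starRingEnd ℂ) ((g q).re))) p :=
            Dc_congr h4 p
        _ = ((4:ℂ)⁻¹*Complex.I) * Dc (fun q => σ q * (starRingEnd ℂ) ((g q).re)) p :=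
            Dc_cmul (hSσ.diffAt.mul hSRb.diffAt) _
        _ = _ := by rw [Dc_mul hSσ.diffAt hSRb.diffAt]
    have EB : (Db σ p * Dc σ p + (σ p)^4/16 - σ p * Db (Dc σ) p
          - Q₀ p * (starRingEnd ℂ) (Q₀ p)) * (g p).imJ
        - Complex.I * σ p * Db (fun x => (starRingEnd ℂ) (Q₀ x)) p
          * (starRingEnd ℂ) ((g p).re) = 0 := by
      linear_combination σ p * F0' - Db σ p * h2 p - (σ p)^2 * F2'
        - (Complex.I*(σ p)^3/4) * h3c p + σ p * Dc σ p * h4 p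
        + Complex.I * (starRingEnd ℂ) (Q₀ p) * h1c p
        + ((σ p)^4 * (g p).imJ/16 - Q₀ p * (starRingEnd ℂ) (Q₀ p) * (g p).imJ) * Complex.I_sq
    -- normSq argument
    set a := Db σ p * Dc σ p + (σ p)^4/16 - σ p * Db (Dc σ) p
      - Q₀ p * (starRingEnd ℂ) (Q₀ p) with hadef
    set c := Complex.I * σ p * Db (fun x => (starRingEnd ℂ) (Q₀ x)) p with hcdef
    have e1c := congrArg (starRingEnd ℂ) EA
    have e2c := congrArg (starRingEnd ℂ) EB
    simp only [map_sub, map_mul, map_zero, Complex.conj_conj] at e1c e2c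
    have key2 : (a * (starRingEnd ℂ) a + c * (starRingEnd ℂ) c)
        * ((g p).re * (starRingEnd ℂ) ((g p).re) - (g p).imJ * (starRingEnd ℂ) ((g p).imJ)) = 0 := by
      linear_combination ((starRingEnd ℂ) a * (starRingEnd ℂ) ((g p).re)) * EA
        + (c * (starRingEnd ℂ) ((g p).imJ)) * e1c
        - ((starRingEnd ℂ) a * (starRingEnd ℂ) ((g p).imJ)) * EB
        - (c * (starRingEnd ℂ) ((g p).re)) * e2c
    have hxy : (g p).re * (starRingEnd ℂ) ((g p).re)
        - (g p).imJ * (starRingEnd ℂ) ((g p).imJ) ≠ 0 := by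
      rw [Complex.mul_conj, Complex.mul_conj, ← Complex.ofReal_sub, Ne, Complex.ofReal_eq_zero]
      intro h
      apply hgnz p
      have e1 : Complex.normSq (2 * (g p).re) = 4 * Complex.normSq ((g p).re) := by
        rw [Complex.normSq_mul]; norm_num
      have e2 : Complex.normSq (2 * (g p).imJ) = 4 * Complex.normSq ((g p).imJ) := by
        rw [Complex.normSq_mul]; norm_num
      rw [LnormSq, e1, e2]
      linarith
    have hsum : a * (starRingEnd ℂ) a + c * (starRingEnd ℂ) c = 0 :=
      (mul_eq_zero.1 key2).resolve_right hxy
    rw [Complex.mul_conj, Complex.mul_conj, ← Complex.ofReal_add, Complex.ofReal_eq_zero] at hsum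
    have hA0 : Complex.normSq a = 0 := by
      nlinarith [Complex.normSq_nonneg a, Complex.normSq_nonneg c]
    have hC0 : Complex.normSq c = 0 := by
      nlinarith [Complex.normSq_nonneg a, Complex.normSq_nonneg c]
    have ha0 : a = 0 := Complex.normSq_eq_zero.1 hA0
    have hc0 : c = 0 := Complex.normSq_eq_zero.1 hC0
    constructor
    · rw [hadef] at ha0; exact ha0
    · rw [hcdef] at hc0
      rcases mul_eq_zero.1 hc0 with h | h
      · rcases mul_eq_zero.1 h with h' | h'
        · exact absurd h' Complex.I_ne_zero
        · exact absurd h' (hσne p)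
      · exact h
  constructor
  · intro p
    have h0 := (key p).2
    rw [Db_conj hSQ.diffAt] at h0
    have hDc : Dc Q₀ p = 0 := by
      have := congrArg (starRingEnd ℂ) h0
      simpa using this
    exact goal1_extract hSQ.diffAt hDc
  · intro p
    have A0 := (key p).1
    have hdu2 : ∀ v w, dd w (dd v σ) p
        = dd w σ p * dd v (uc τ₀) p + σ p * dd w (dd v (uc τ₀)) p := by
      intro v w
      calc dd w (dd v σ) p = dd w (fun q => σ q * dd v (uc τ₀) q) p :=
            (dd_congr (fun q => (hdu v q)) w p).symm
        _ = _ := dd_mul hSσ.diffAt (hSu.dd v).diffAt w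
    have hDbDcσ : Db (Dc σ) p = Db σ p * Dc (uc τ₀) p + σ p * Db (Dc (uc τ₀)) p := by
      calc Db (Dc σ) p = Db (fun q => σ q * Dc (uc τ₀) q) p := (Db_congr hduDc p).symm
        _ = _ := Db_mul hSσ.diffAt hSu.Dc'.diffAt
    have hQQb : Q₀ p * (starRingEnd ℂ) (Q₀ p) = ((Complex.normSq (Q₀ p) : ℝ) : ℂ) :=
      Complex.mul_conj _
    have hMain : (σ p * σ p) * Db (Dc (uc τ₀)) p
        = (σ p)^4/16 - ((Complex.normSq (Q₀ p) : ℝ) : ℂ) := by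
      linear_combination (-1 : ℂ) * A0 - σ p * hDbDcσ - Db σ p * hduDc p - hQQb
    have hexp : Db (Dc (uc τ₀)) p
        = (4:ℂ)⁻¹ * (dd (1,0) (dd (1,0) (uc τ₀)) p + dd (0,1) (dd (0,1) (uc τ₀)) p) := by
      rw [Db_def, dd_Dc hSu, dd_Dc hSu, dd_swap hSu (0,1) (1,0)]
      linear_combination (-(4:ℂ)⁻¹ * dd (0,1) (dd (0,1) (uc τ₀)) p) * Complex.I_sq
    have hreal : τ₀ p * (-(Complex.normSq (Q₀ p)) / τ₀ p + τ₀ p / 16)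
        = -(Complex.normSq (Q₀ p)) + (τ₀ p)^2/16 := by
      rw [mul_comm, add_mul, div_mul_cancel₀ _ (hτne p)]
      ring
    have hrealC : ((τ₀ p : ℝ) : ℂ) * ((-(Complex.normSq (Q₀ p)) / τ₀ p + τ₀ p / 16 : ℝ) : ℂ)
        = -((Complex.normSq (Q₀ p) : ℝ) : ℂ) + ((τ₀ p : ℝ) : ℂ)^2/16 := by
      rw [← Complex.ofReal_mul, hreal]
      push_cast
      ring
    have hτC : ((τ₀ p : ℝ) : ℂ) ≠ 0 := Complex.ofReal_ne_zero.2 (hτne p)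
    rw [goal2_extract τ₀ hSu p]
    have hfin : (4:ℂ)⁻¹ * (dd (1,0) (dd (1,0) (uc τ₀)) p + dd (0,1) (dd (0,1) (uc τ₀)) p)
        = ((-(Complex.normSq (Q₀ p)) / τ₀ p + τ₀ p / 16 : ℝ) : ℂ) := by
      apply mul_left_cancel₀ hτC
      linear_combination hMain - ((4:ℂ)⁻¹ * (dd (1,0) (dd (1,0) (uc τ₀)) p
          + dd (0,1) (dd (0,1) (uc τ₀)) p)) * hsq p - hrealC
        - (σ p * σ p) * hexp + ((((τ₀ p : ℝ) : ℂ) + σ p * σ p)/16) * hsq p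
    apply Quaternion.ext_iff.2
    refine ⟨?_, ?_, ?_, ?_⟩ <;> simp [rQ, hfin]
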